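/- Let D be a multigraph on vertex set V, v ∈ V a vertex with d(v) ≤ |V| - 1, and suppose D is transformed by, for each edge of v beyond one per neighbor, lifting that edge to a distinct non-neighbor of v (replacing edge vu by the path v–w–u through a non-neighbor w, each non-neighbor used at most once). Then in the resulting multigraph D', v has no multiple edges (d_{D'}(v) = γ_{D'}(v)), d_{D'}(v) = d_D(v), and any resolution of D' in Kₙ yields a resolution of D. -/

import Mathlib

/-- Degree of `v` in a multigraph given as a list of (non-loop) edges, counted with multiplicity. -/
def mdeg {V : Type*} [DecidableEq V] (D : List (V × V)) (v : V) : ℕ :=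
  (D.filter (fun p => p.1 = v ∨ p.2 = v)).length

/-- The number `γ(v)` of distinct neighbors of `v`. -/
def gamma {V : Type*} [Fintype V] [DecidableEq V] (D : List (V × V)) (v : V) : ℕ :=
  (Finset.univ.filter (fun u => (v, u) ∈ D ∨ (u, v) ∈ D)).card

/-- A demand multigraph can be resolved in the complete graph: there is an assignment
of a path in `K_V` to each demand edge, connecting its endpoints, such that the paths
are pairwise edge-disjoint. -/
def Resolvable {V : Type*} (D : List (V × V)) : Prop :=
  ∃ P : (i : Fin D.length) → (⊤ : SimpleGraph V).Walk (D.get i).1 (D.get i).2,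
    (∀ i, (P i).IsPath) ∧
    ∀ i j, i ≠ j → ∀ e ∈ (P i).edges, e ∉ (P j).edges

/-- A single lifting step at `v`: an edge `p` of `D` incident to `v` is replaced by the
path through a vertex `w` that is a non-neighbor of `v` (and not an endpoint of `p`). -/
def LiftAt {V : Type*} [DecidableEq V] (v : V) (D D' : List (V × V)) : Prop :=
  ∃ p ∈ D, (p.1 = v ∨ p.2 = v) ∧ ∃ w : V,
    w ≠ p.1 ∧ w ≠ p.2 ∧ ¬((v, w) ∈ D ∨ (w, v) ∈ D) ∧
    D' = (p.1, w) :: (w, p.2) :: D.erase p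


theorem perm_get_map {α : Type*} {l l' : List α} (h : l.Perm l') :
    ∃ σ : Fin l.length → Fin l'.length, Function.Injective σ ∧ ∀ i, l.get i = l'.get (σ i) := by
  induction h with
  | nil => exact ⟨id, fun a b h => h, fun i => i.elim0⟩
  | cons x h ih =>
    obtain ⟨σ, hinj, hget⟩ := ih
    refine ⟨fun i => Fin.cases ⟨0, Nat.succ_pos _⟩ (fun j => (σ j).succ) i, ?_, ?_⟩
    · intro a b hab
      induction a using Fin.cases with
      | zero => induction b using Fin.cases with
        | zero => rfl
        | succ j =>
          simp only [Fin.cases_zero, Fin.cases_succ] at hab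
          exact absurd hab.symm (Fin.succ_ne_zero _)
      | succ j => induction b using Fin.cases with
        | zero =>
          simp only [Fin.cases_zero, Fin.cases_succ] at hab
          exact absurd hab (Fin.succ_ne_zero _)
        | succ k =>
          simp only [Fin.cases_succ] at hab
          exact congrArg Fin.succ (hinj (Fin.succ_injective _ hab))
    · intro i
      induction i using Fin.cases with
      | zero => rfl
      | succ j => simpa using hget j
  | swap x y l =>
    refine ⟨fun i => if h0 : i.val = 0 then ⟨1, by simp⟩ else if h1 : i.val = 1 then ⟨0, by simp⟩
      else ⟨i.val, by simpa using i.2⟩, ?_, ?_⟩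
    · intro ⟨a, ha⟩ ⟨b, hb⟩ hab
      simp only at hab
      split_ifs at hab <;> simp_all [Fin.ext_iff]
    · rintro ⟨i, hi⟩
      match i with
      | 0 => rfl
      | 1 => rfl
      | (n+2) => simp
  | trans h1 h2 ih1 ih2 =>
    obtain ⟨σ1, hinj1, hget1⟩ := ih1
    obtain ⟨σ2, hinj2, hget2⟩ := ih2
    exact ⟨σ2 ∘ σ1, hinj2.comp hinj1, fun i => (hget1 i).trans (hget2 (σ1 i))⟩

theorem resolvable_of_map {V : Type*} {D D' : List (V × V)}
    (σ : Fin D.length → Fin D'.length) (hinj : Function.Injective σ)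
    (hget : ∀ i, D.get i = D'.get (σ i)) (h : Resolvable D') : Resolvable D := by
  obtain ⟨P, hpath, hdisj⟩ := h
  refine ⟨fun i => (P (σ i)).copy (congrArg Prod.fst (hget i)).symm (congrArg Prod.snd (hget i)).symm,
    fun i => by simpa using hpath (σ i), fun i j hij e he hej => ?_⟩
  rw [SimpleGraph.Walk.edges_copy] at he hej
  exact hdisj _ _ (fun hc => hij (hinj hc)) e he hej


theorem resolvable_of_perm {V : Type*} {D D' : List (V × V)} (h : D.Perm D') :
    Resolvable D' → Resolvable D := fun hr => by
  obtain ⟨σ, hinj, hget⟩ := perm_get_map h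
  exact resolvable_of_map σ hinj hget hr

theorem resolvable_cons_cons {V : Type*} [DecidableEq V] {a b w : V} {E : List (V × V)}
    (h : Resolvable ((a, w) :: (w, b) :: E)) : Resolvable ((a, b) :: E) := by
  obtain ⟨P, hpath, hdisj⟩ := h
  refine ⟨fun i => Fin.cases
      (((P ⟨0, Nat.succ_pos _⟩).append (P ⟨1, by simp⟩)).bypass)
      (fun j => P ⟨j.val + 2, by simpa using j.2⟩) i, ?_, ?_⟩
  · intro i
    induction i using Fin.cases with
    | zero => exact SimpleGraph.Walk.bypass_isPath _
    | succ j => exact hpath _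
  · intro i j hij e hei hej
    induction i using Fin.cases with
    | zero =>
      induction j using Fin.cases with
      | zero => exact hij rfl
      | succ k =>
        simp only [Fin.cases_zero, Fin.cases_succ] at hei hej
        have := SimpleGraph.Walk.edges_bypass_subset _ hei
        erw [SimpleGraph.Walk.edges_append, List.mem_append] at this
        rcases this with h0 | h1
        · exact hdisj ⟨0, Nat.succ_pos _⟩ ⟨k.val + 2, by simpa using k.2⟩ (by simp [Fin.ext_iff]) e h0 hej
        · exact hdisj ⟨1, by simp⟩ ⟨k.val + 2, by simpa using k.2⟩ (by simp [Fin.ext_iff]) e h1 hej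
    | succ k =>
      induction j using Fin.cases with
      | zero =>
        simp only [Fin.cases_zero, Fin.cases_succ] at hei hej
        have := SimpleGraph.Walk.edges_bypass_subset _ hej
        erw [SimpleGraph.Walk.edges_append, List.mem_append] at this
        rcases this with h0 | h1
        · exact hdisj ⟨k.val + 2, by simpa using k.2⟩ ⟨0, Nat.succ_pos _⟩ (by simp [Fin.ext_iff]) e hei h0
        · exact hdisj ⟨k.val + 2, by simpa using k.2⟩ ⟨1, by simp⟩ (by simp [Fin.ext_iff]) e hei h1
      | succ m =>
        simp only [Fin.cases_succ] at hei hej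
        refine hdisj ⟨k.val + 2, by simpa using k.2⟩ ⟨m.val + 2, by simpa using m.2⟩ ?_ e hei hej
        simp only [ne_eq, Fin.ext_iff]
        intro hc
        exact hij (by simpa [Fin.ext_iff] using hc)

theorem perm_cons_erase' {α : Type*} [BEq α] [LawfulBEq α] {a : α} {l : List α} (h : a ∈ l) :
    l.Perm (a :: l.erase a) := by
  induction l with
  | nil => cases h
  | cons b t ih =>
    rw [List.erase_cons]
    by_cases hba : b = a
    · rw [if_pos (beq_iff_eq.mpr hba), hba]
    · rw [if_neg (by simpa using hba)]
      have h' : a ∈ t := (List.mem_cons.mp h).resolve_left (fun hc => hba hc.symm)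
      exact ((ih h').cons b).trans (List.Perm.swap a b _)

def nbrFun {V :Type*} [DecidableEq V] (v : V) (q : V × V) : V := if q.1 = v then q.2 else q.1

section XX
variable {V : Type*} [Fintype V] [DecidableEq V]

lemma mdeg_perm {D D' : List (V × V)} (v : V) (h : D.Perm D') : mdeg D v = mdeg D' v := by
  simp only [mdeg, ← List.countP_eq_length_filter]; exact h.countP_eq _

lemma mdeg_cons (q : V × V) (E : List (V × V)) (v : V) :
    mdeg (q :: E) v = (if q.1 = v ∨ q.2 = v then 1 else 0) + mdeg E v := by
  simp only [mdeg, List.filter_cons]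
  by_cases h : q.1 = v ∨ q.2 = v
  · simp [h, Nat.add_comm]
  · simp [h]

lemma nbr_eq_toFinset (D : List (V × V)) (hloop : ∀ p ∈ D, p.1 ≠ p.2) (v : V) :
    Finset.univ.filter (fun u => (v, u) ∈ D ∨ (u, v) ∈ D)
      = ((D.filter (fun p => p.1 = v ∨ p.2 = v)).map (nbrFun v)).toFinset := by
  ext x
  simp only [Finset.mem_filter, Finset.mem_univ, true_and, List.mem_toFinset, List.mem_map,
    List.mem_filter, decide_eq_true_eq]
  constructor
  · rintro (h | h)
    · exact ⟨(v, x), ⟨h, Or.inl rfl⟩, by simp [nbrFun]⟩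
    · refine ⟨(x, v), ⟨h, Or.inr rfl⟩, ?_⟩
      have hx : x ≠ v := hloop _ h
      simp [nbrFun, hx]
  · rintro ⟨q, ⟨hq, hcond⟩, rfl⟩
    by_cases h1 : q.1 = v
    · have hn : nbrFun v q = q.2 := if_pos h1
      left; rw [hn, ← h1]; simpa using hq
    · have h2 : q.2 = v := hcond.resolve_left h1
      have hn : nbrFun v q = q.1 := if_neg h1
      right; rw [hn, ← h2]; simpa using hq

lemma gamma_le_mdeg (D : List (V × V)) (hloop : ∀ p ∈ D, p.1 ≠ p.2) (v : V) :
    gamma D v ≤ mdeg D v := by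
  rw [gamma, nbr_eq_toFinset D hloop v]
  exact (List.toFinset_card_le _).trans (by simp [mdeg])

lemma lift_step (D : List (V × V)) (hloop : ∀ p ∈ D, p.1 ≠ p.2) (v : V)
    (hlt : gamma D v < mdeg D v) (hdeg : mdeg D v ≤ Fintype.card V - 1) :
    ∃ p ∈ D, (p.1 = v ∨ p.2 = v) ∧ ∃ w : V,
      w ≠ p.1 ∧ w ≠ p.2 ∧ ¬((v, w) ∈ D ∨ (w, v) ∈ D) ∧
      mdeg ((p.1, w) :: (w, p.2) :: D.erase p) v = mdeg D v ∧
      gamma ((p.1, w) :: (w, p.2) :: D.erase p) v = gamma D v + 1 ∧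
      (∀ r ∈ (p.1, w) :: (w, p.2) :: D.erase p, r.1 ≠ r.2) := by
  classical
  set Pv : V × V → Prop := fun p => p.1 = v ∨ p.2 = v with hPv
  set L : List V := (D.filter (fun p => p.1 = v ∨ p.2 = v)).map (nbrFun v) with hL
  have hgamL : gamma D v = L.toFinset.card := by rw [gamma, nbr_eq_toFinset D hloop v]
  have hlenL : L.length = mdeg D v := by simp [hL, mdeg]
  -- find a repeated neighbor
  obtain ⟨u, hu2⟩ : ∃ u, 2 ≤ L.count u := by
    by_contra hc
    push_neg at hc
    have hnd : L.Nodup := List.nodup_iff_count_le_one.mpr (fun a => by have := hc a; omega)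
    rw [hgamL, List.toFinset_card_of_nodup hnd, hlenL] at hlt
    omega
  have huL : u ∈ L := List.count_pos_iff.mp (by omega)
  obtain ⟨p, hpf, hpu⟩ := List.mem_map.mp huL
  have hpD : p ∈ D := (List.mem_filter.mp hpf).1
  have hpv : p.1 = v ∨ p.2 = v := by simpa using (List.mem_filter.mp hpf).2
  have hp12 : p.1 ≠ p.2 := hloop p hpD
  have huv : u ≠ v := by
    by_cases h1 : p.1 = v
    · rw [← hpu, nbrFun, if_pos h1, ← h1]; exact fun h => hp12 h.symm
    · rw [← hpu, nbrFun, if_neg h1]; exact h1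
  -- second witness for u among edges other than p
  have hperm := perm_cons_erase' hpf
  have hLperm := hperm.map (nbrFun v)
  rw [List.map_cons, hpu] at hLperm
  have hcnt := hLperm.count_eq u
  rw [List.count_cons_self] at hcnt
  rw [← hL] at hcnt
  have hmem : u ∈ ((D.filter (fun p => p.1 = v ∨ p.2 = v)).erase p).map (nbrFun v) :=
    List.count_pos_iff.mp (by omega)
  obtain ⟨q, hq_mem, hq_u⟩ := List.mem_map.mp hmem
  have hq_filter : q ∈ D.filter (fun p => p.1 = v ∨ p.2 = v) := List.mem_of_mem_erase hq_mem
  have hqD : q ∈ D := (List.mem_filter.mp hq_filter).1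
  have hqv : q.1 = v ∨ q.2 = v := by simpa using (List.mem_filter.mp hq_filter).2
  have hqE : q ∈ D.erase p := by
    by_cases hqp : q = p
    · subst hqp
      have h1 : 1 ≤ ((D.filter (fun p => p.1 = v ∨ p.2 = v)).erase q).count q :=
        List.count_pos_iff.mpr hq_mem
      have h2 := List.count_erase_self (a := q) (l := D.filter (fun p => p.1 = v ∨ p.2 = v))
      have h3 : (D.filter (fun p => p.1 = v ∨ p.2 = v)).count q ≤ D.count q :=
        (List.filter_sublist (l := D)).count_le q
      have h4 := List.count_erase_self (a := q) (l := D)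
      exact List.count_pos_iff.mp (by omega)
    · exact (List.mem_erase_of_ne hqp).mpr hqD

  have hu_nbrE : (v, u) ∈ D.erase p ∨ (u, v) ∈ D.erase p := by
    by_cases h1 : q.1 = v
    · left
      have : q = (v, u) := by
        rw [← hq_u, nbrFun, if_pos h1, ← h1]
      rwa [← this]
    · right
      have h2 : q.2 = v := hqv.resolve_left h1
      have : q = (u, v) := by
        rw [← hq_u, nbrFun, if_neg h1, ← h2]
      rwa [← this]
  have hu_nbrD : (v, u) ∈ D ∨ (u, v) ∈ D :=
    hu_nbrE.imp List.mem_of_mem_erase List.mem_of_mem_erase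
  -- choose w
  set N : Finset V := Finset.univ.filter (fun u => (v, u) ∈ D ∨ (u, v) ∈ D) with hN
  have huN : u ∈ N := by simp [hN, hu_nbrD]
  obtain ⟨w, hw⟩ : ∃ w, w ∉ insert v N := by
    by_contra hc
    push_neg at hc
    have he : insert v N = Finset.univ := Finset.eq_univ_iff_forall.mpr hc
    have h1 : (insert v N).card ≤ N.card + 1 := Finset.card_insert_le _ _
    have h2 : N.card = gamma D v := rfl
    have h3 : 1 ≤ Fintype.card V := Fintype.card_pos_iff.mpr ⟨v⟩
    rw [he, Finset.card_univ] at h1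
    omega
  have hwv : w ≠ v := fun h => hw (h ▸ Finset.mem_insert_self v N)
  have hwN : w ∉ N := fun h => hw (Finset.mem_insert_of_mem h)
  have hwnon : ¬((v, w) ∈ D ∨ (w, v) ∈ D) := fun h => hwN (by simp [hN, h])
  have hwu : w ≠ u := fun h => hwN (h ▸ huN)
  have hwp1 : w ≠ p.1 := by
    by_cases h1 : p.1 = v
    · rw [h1]; exact hwv
    · have : u = p.1 := by rw [← hpu, nbrFun, if_neg h1]
      rw [← this]; exact hwu
  have hwp2 : w ≠ p.2 := by
    by_cases h1 : p.1 = v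
    · have : u = p.2 := by rw [← hpu, nbrFun, if_pos h1]
      rw [← this]; exact hwu
    · rw [hpv.resolve_left h1]; exact hwv
  refine ⟨p, hpD, hpv, w, hwp1, hwp2, hwnon, ?_, ?_, ?_⟩
  · -- mdeg preserved
    have h0 : mdeg D v = mdeg (p :: D.erase p) v := mdeg_perm v (perm_cons_erase' hpD)
    rw [h0, mdeg_cons, mdeg_cons, mdeg_cons]
    rcases hpv with h1 | h2
    · have h2' : ¬ p.2 = v := fun h => hp12 (h1.trans h.symm)
      simp [h1, h2', hwv]
    · have h1' : ¬ p.1 = v := fun h => hp12 (h.trans h2.symm)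
      simp [h1', h2, hwv]
  · -- gamma increases
    have hset : Finset.univ.filter
        (fun x => (v, x) ∈ (p.1, w) :: (w, p.2) :: D.erase p ∨
          (x, v) ∈ (p.1, w) :: (w, p.2) :: D.erase p) = insert w N := by
      ext x
      rw [Finset.mem_filter, Finset.mem_insert]
      simp only [Finset.mem_univ, true_and, hN, Finset.mem_filter]
      constructor
      · rintro (h | h) <;> rcases List.mem_cons.mp h with h' | h'
        · exact Or.inl (congrArg Prod.snd h')
        · rcases List.mem_cons.mp h' with h'' | h''
          · exact absurd (congrArg Prod.fst h'' : v = w) (fun hc => hwv hc.symm)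
          · exact Or.inr (Or.inl (List.mem_of_mem_erase h''))
        · exact absurd (congrArg Prod.snd h' : v = w) (fun hc => hwv hc.symm)
        · rcases List.mem_cons.mp h' with h'' | h''
          · exact Or.inl (congrArg Prod.fst h'')
          · exact Or.inr (Or.inr (List.mem_of_mem_erase h''))
      · rintro (rfl | h | h)
        · rcases hpv with h1 | h2
          · exact Or.inl (List.mem_cons.mpr (Or.inl (by rw [h1])))
          · exact Or.inr (List.mem_cons.mpr (Or.inr (List.mem_cons.mpr (Or.inl (by rw [h2])))))
        · -- (v, x) ∈ D
          by_cases hxp : (v, x) = p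
          · have h1 : p.1 = v := by rw [← hxp]
            have hx : x = u := by rw [← hpu, nbrFun, if_pos h1, ← hxp]
            subst hx
            rcases hu_nbrE with h' | h'
            · exact Or.inl (List.mem_cons.mpr (Or.inr (List.mem_cons.mpr (Or.inr h'))))
            · exact Or.inr (List.mem_cons.mpr (Or.inr (List.mem_cons.mpr (Or.inr h'))))
          · exact Or.inl (List.mem_cons.mpr (Or.inr (List.mem_cons.mpr
              (Or.inr ((List.mem_erase_of_ne hxp).mpr h)))))
        · -- (x, v) ∈ D
          by_cases hxp : (x, v) = p
          · have h1 : ¬ p.1 = v := by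
              rw [← hxp]
              intro hxv
              exact hloop _ h (by simpa [← hxp] using hxv)
            have hx : x = u := by rw [← hpu, nbrFun, if_neg h1, ← hxp]
            subst hx
            rcases hu_nbrE with h' | h'
            · exact Or.inl (List.mem_cons.mpr (Or.inr (List.mem_cons.mpr (Or.inr h'))))
            · exact Or.inr (List.mem_cons.mpr (Or.inr (List.mem_cons.mpr (Or.inr h'))))
          · exact Or.inr (List.mem_cons.mpr (Or.inr (List.mem_cons.mpr
              (Or.inr ((List.mem_erase_of_ne hxp).mpr h)))))
    rw [gamma, hset, Finset.card_insert_of_notMem hwN]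
    rfl
  · -- no loops
    intro r hr
    rcases List.mem_cons.mp hr with rfl | hr'
    · exact fun h => hwp1 h.symm
    · rcases List.mem_cons.mp hr' with rfl | hr''
      · exact hwp2
      · exact hloop r (List.mem_of_mem_erase hr'')

lemma resolvable_of_lift {D : List (V × V)} {p : V × V} (hp : p ∈ D) {w : V}
    (h : Resolvable ((p.1, w) :: (w, p.2) :: D.erase p)) : Resolvable D := by
  have h2 := resolvable_cons_cons h
  rw [Prod.mk.eta] at h2
  exact resolvable_of_perm (perm_cons_erase' hp) h2

lemma resolve_aux (v : V) :
    ∀ (n : ℕ) (D : List (V × V)), (∀ p ∈ D, p.1 ≠ p.2) → mdeg D v ≤ Fintype.card V - 1 →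
    mdeg D v - gamma D v ≤ n →
    ∃ D' : List (V × V),
      Relation.ReflTransGen (LiftAt v) D D' ∧
      mdeg D' v = mdeg D v ∧
      mdeg D' v = gamma D' v ∧
      (Resolvable D' → Resolvable D) := by
  intro n
  induction n with
  | zero =>
    intro D hloop hdeg hm
    refine ⟨D, .refl, rfl, ?_, id⟩
    have := gamma_le_mdeg D hloop v
    omega
  | succ n ih =>
    intro D hloop hdeg hm
    by_cases heq : mdeg D v = gamma D v
    · exact ⟨D, .refl, rfl, heq, id⟩
    · have hle := gamma_le_mdeg D hloop v
      have hlt : gamma D v < mdeg D v := lt_of_le_of_ne hle (fun h => heq h.symm)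
      obtain ⟨p, hpD, hpv, w, hw1, hw2, hwnon, hmdeg2, hgam2, hloop2⟩ :=
        lift_step D hloop v hlt hdeg
      obtain ⟨D', hsteps, h1, h2, h3⟩ := ih ((p.1, w) :: (w, p.2) :: D.erase p) hloop2
        (by rw [hmdeg2]; exact hdeg) (by omega)
      exact ⟨D', Relation.ReflTransGen.head ⟨p, hpD, hpv, w, hw1, hw2, hwnon, rfl⟩ hsteps,
        by rw [h1, hmdeg2], h2, fun hr => resolvable_of_lift hpD (h3 hr)⟩

end XX

/-- **Resolution of the multiplicities of `v`.** If `d(v) ≤ n - 1`, then by repeatedly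
lifting edges of `v` to non-neighbors of `v`, `D` can be transformed into a demand
multigraph `D'` in which `v` has the same degree but no multiple edges
(`d_{D'}(v) = γ_{D'}(v)`), and any resolution of `D'` yields a resolution of `D`. -/
theorem resolve_multiplicities_at_vertex {V : Type*} [Fintype V] [DecidableEq V]
    (D : List (V × V)) (hloop : ∀ p ∈ D, p.1 ≠ p.2) (v : V)
    (hdeg : mdeg D v ≤ Fintype.card V - 1) :
    ∃ D' : List (V × V),
      Relation.ReflTransGen (LiftAt v) D D' ∧
      mdeg D' v = mdeg D v ∧
      mdeg D' v = gamma D' v ∧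
      (Resolvable D' → Resolvable D) := by
  obtain ⟨D', hsteps, h1, h2, h3⟩ := resolve_aux v (mdeg D v) D hloop hdeg (by omega)
  exact ⟨D', hsteps, h1, h2, h3⟩
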